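/- Let Λ be a system of representatives for the conjugacy classes of the CM-types of K. Then Σ_{Φ∈Λ} Ind_{H̃₀(Φ)}^G(χ_{H̃₀(Φ)/H̃(Φ)}) = Σ_{I∈J_odd} Ind_{H₀^G(I)}^G(χ̃_I) as characters of G, where for I ⊆ G/H₀ with |I| odd, H₀^G(I) := {σ ∈ G : ρ(σ)I = I}, and χ̃_I is the character of H₀^G(I) given by σ ↦ (−1)^{Σ_{φH₀∈I} r_{Φ₀}(σ)(φH₀)}, whose kernel is H(I). -/

import Mathlib

/- Common combinatorial skeleton for the Galois-theoretic setting of the paper: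
`G = Gal(K^c/ℚ)`, `H = Gal(K^c/K)`, `H₀ = Gal(K^c/K₀)`, `ι` the complex conjugation.
Embeddings `K ↪ ℂ` correspond to left cosets `G ⧸ H`, embeddings `K₀ ↪ ℂ` to `G ⧸ H₀`. -/

open Pointwise
open scoped Classical

variable {G : Type} [Group G]

/-- A CM-type of `K`: a set `Φ` of embeddings `K ↪ ℂ` (i.e. of cosets in `G ⧸ H`) such that
`Φ` and `ιΦ` are disjoint and every embedding lies in `Φ ∪ ιΦ`. -/
def IsCMType (H : Subgroup G) (ι : G) (Φ : Set (G ⧸ H)) : Prop :=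
  (∀ φ ∈ Φ, ι • φ ∉ Φ) ∧ ∀ φ : G ⧸ H, φ ∈ Φ ∨ ι • φ ∈ Φ

/-- `S_Φ = ⋃_{φ ∈ Φ} φH ⊆ G`. -/
def SPhi (H : Subgroup G) (Φ : Set (G ⧸ H)) : Set G := {g : G | (g : G ⧸ H) ∈ Φ}

/-- `H̃(Φ) = {σ ∈ G : σ S_Φ = S_Φ}`. -/
def Htilde (H : Subgroup G) (Φ : Set (G ⧸ H)) : Subgroup G := MulAction.stabilizer G (SPhi H Φ)

/-- The natural projection `G ⧸ H → G ⧸ H₀` (restriction of embeddings of `K` to `K₀`). -/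
def proj (H H₀ : Subgroup G) (h : H ≤ H₀) : G ⧸ H → G ⧸ H₀ :=
  Quotient.map' id fun a b hab => by
    rw [QuotientGroup.leftRel_apply] at *
    exact h hab

open Classical in
/-- The 1-cocycle `r_Φ : G → Ind`, `r_Φ(τ)(φᵢH₀) = 0` iff `τ⁻¹φᵢ ∈ Φ`, where `φᵢ` is the
unique member of `Φ` lying over the coset `φᵢH₀`. -/
noncomputable def rPhi (H H₀ : Subgroup G) (h : H ≤ H₀) (Φ : Set (G ⧸ H)) (τ : G) :
    (G ⧸ H₀) → ZMod 2 :=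
  fun x => if ∃ φ ∈ Φ, proj H H₀ h φ = x ∧ τ⁻¹ • φ ∈ Φ then 0 else 1

/-- The action of `G` on `Ind = Map(G/H₀, ℤ/2ℤ)`, `(σ·f)(τH₀) = f(σ⁻¹τH₀)`. -/
def indAct (H₀ : Subgroup G) (σ : G) (f : (G ⧸ H₀) → ZMod 2) : (G ⧸ H₀) → ZMod 2 :=
  fun x => f (σ⁻¹ • x)

/-- For `f ∈ Ind`, the CM-type `Φ_f = {ι^{f(φ₁H₀)}φ₁, …, ι^{f(φ_NH₀)}φ_N}` attached to a fixed
CM-type `Φ₀`. -/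
noncomputable def PhiF (H H₀ : Subgroup G) (h : H ≤ H₀) (ι : G) (Φ₀ : Set (G ⧸ H))
    (f : (G ⧸ H₀) → ZMod 2) : Set (G ⧸ H) :=
  (fun φ => ι ^ (f (proj H H₀ h φ)).val • φ) '' Φ₀

/-- The `*`-action of `G` on `Ind`: `τ * f := r_{Φ₀}(τ) + τ·f`. -/
noncomputable def starAct (H H₀ : Subgroup G) (h : H ≤ H₀) (Φ₀ : Set (G ⧸ H)) (τ : G)
    (f : (G ⧸ H₀) → ZMod 2) : (G ⧸ H₀) → ZMod 2 :=
  rPhi H H₀ h Φ₀ τ + indAct H₀ τ f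

/-- Induced character `Ind_U^G(χ)` of a class-function-style character `χ` defined on
(a superset of) `U`, by the standard formula `(Ind_U^G χ)(g) = |U|⁻¹ ∑_{x∈G, x⁻¹gx∈U} χ(x⁻¹gx)`. -/
noncomputable def indChar {G : Type} [Group G] (U : Subgroup G) (χ : G → ℂ) (g : G) : ℂ :=
  (Nat.card U : ℂ)⁻¹ * ∑ᶠ x : G, if x⁻¹ * g * x ∈ U then χ (x⁻¹ * g * x) else 0


section AuxPure
variable {X : Type} [Fintype X] [DecidableEq X]

lemma zmod2_cases : ∀ a : ZMod 2, a = 0 ∨ a = 1 := by decide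

lemma zval0 : ((0:ZMod 2)).val = 0 := rfl
lemma zval1 : ((1:ZMod 2)).val = 1 := rfl
lemma zval2 : ((2:ZMod 2)).val = 0 := rfl

lemma sgn_add (a b : ZMod 2) : ((-1:ℂ))^((a+b).val) = (-1)^a.val * (-1)^b.val := by
  rcases zmod2_cases a with rfl|rfl <;> rcases zmod2_cases b with rfl|rfl <;>
    norm_num [zval0, zval1, zval2]

lemma sgn_natCast (n : ℕ) : ((-1:ℂ))^(((n : ZMod 2)).val) = (-1)^n := by
  induction n with
  | zero => simp [zval0]
  | succ k ih => rw [Nat.cast_succ, sgn_add, ih, zval1]; ring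

variable {X : Type} [Fintype X] [DecidableEq X]

/-- character orthogonality over (X → ZMod 2) -/
lemma char_sum (u : X → ZMod 2) :
    (∑ f : X → ZMod 2, ((-1:ℂ))^((∑ x, f x * u x).val)) =
      if u = 0 then (2:ℂ)^(Fintype.card X) else 0 := by
  split_ifs with h
  · subst h
    simp only [Pi.zero_apply, mul_zero, Finset.sum_const_zero, zval0, pow_zero]
    simp [Finset.card_univ, ← Fintype.card_fun]
  · obtain ⟨x₀, hx₀⟩ : ∃ x₀, u x₀ ≠ 0 := by
      by_contra hc
      push_neg at hc
      exact h (funext hc)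
    have hu1 : u x₀ = 1 := (zmod2_cases (u x₀)).resolve_left hx₀
    apply Finset.sum_involution (fun f _ => Function.update f x₀ (f x₀ + 1))
    · intro f _
      have hsum : (∑ x, (Function.update f x₀ (f x₀ + 1)) x * u x) = (∑ x, f x * u x) + 1 := by
        rw [← Finset.sum_add_sum_compl {x₀}, ← Finset.sum_add_sum_compl {x₀} (fun x => f x * u x)]
        simp only [Finset.sum_singleton, Function.update_self, hu1]
        have : ∀ x ∈ ({x₀} : Finset X)ᶜ, (Function.update f x₀ (f x₀ + 1)) x * u x = f x * u x := by
          intro x hx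
          rw [Function.update_of_ne (by simpa using hx)]
        rw [Finset.sum_congr rfl this]
        ring
      rw [hsum, sgn_add, zval1]
      ring
    · intro f _ hne hc
      have := congrFun hc x₀
      simp at this
    · intro f _
      funext x
      by_cases hx : x = x₀
      · subst hx; simp [add_assoc, show (1+1:ZMod 2)=0 from rfl]
      · simp [Function.update_of_ne hx]
    · intro f _; exact Finset.mem_univ _

lemma char2_iff : ∀ a b c : ZMod 2, (a = c + b) ↔ (a + b + c = 0) := by decide
lemma char2_iff2 : ∀ a b : ZMod 2, (a + b = 0) ↔ (b = a) := by decide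

lemma count_eq (e : X ≃ X) (tgt : X → ZMod 2) :
    (∑ f : X → ZMod 2, if (∀ x, f x = tgt x + f (e.symm x)) then (1:ℂ) else 0) =
    ∑ h ∈ Finset.univ.filter (fun h : X → ZMod 2 => ∀ x, h (e x) = h x),
      ((-1:ℂ))^((∑ x, tgt x * h x).val) := by
  have h2 : ((2:ℂ)^(Fintype.card X)) ≠ 0 := pow_ne_zero _ two_ne_zero
  apply mul_left_cancel₀ h2
  calc (2:ℂ)^(Fintype.card X) * ∑ f : X → ZMod 2,
        (if (∀ x, f x = tgt x + f (e.symm x)) then (1:ℂ) else 0)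
      = ∑ f : X → ZMod 2, (if (∀ x, f x = tgt x + f (e.symm x))
          then (2:ℂ)^(Fintype.card X) else 0) := by
        rw [Finset.mul_sum]
        exact Finset.sum_congr rfl fun f _ => by rw [mul_ite, mul_one, mul_zero]
    _ = ∑ f : X → ZMod 2, ∑ h : X → ZMod 2,
          ((-1:ℂ))^((∑ x, h x * (f x + f (e.symm x) + tgt x)).val) := by
        refine Finset.sum_congr rfl fun f _ => ?_
        rw [char_sum (fun x => f x + f (e.symm x) + tgt x)]
        congr 1
        · rw [eq_iff_iff]
          constructor
          · intro hc
            funext x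
            exact (char2_iff _ _ _).1 (hc x)
          · intro hc x
            exact (char2_iff _ _ _).2 (congrFun hc x)
    _ = ∑ h : X → ZMod 2, ∑ f : X → ZMod 2,
          ((-1:ℂ))^((∑ x, f x * (h x + h (e x))).val) * ((-1:ℂ))^((∑ x, h x * tgt x).val) := by
        rw [Finset.sum_comm]
        refine Finset.sum_congr rfl fun h _ => Finset.sum_congr rfl fun f _ => ?_
        rw [← sgn_add]
        congr 2
        have reidx : (∑ x, h x * f (e.symm x)) = ∑ x, h (e x) * f x := by
          have := Equiv.sum_comp e (fun x => h x * f (e.symm x))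
          simp only [Equiv.symm_apply_apply] at this
          exact this.symm
        calc (∑ x, h x * (f x + f (e.symm x) + tgt x))
            = (∑ x, (h x * f x + h x * f (e.symm x))) + ∑ x, h x * tgt x := by
              rw [← Finset.sum_add_distrib]
              exact Finset.sum_congr rfl fun x _ => by ring
          _ = ((∑ x, h x * f x) + ∑ x, h (e x) * f x) + ∑ x, h x * tgt x := by
              rw [Finset.sum_add_distrib, reidx]
          _ = (∑ x, f x * (h x + h (e x))) + ∑ x, h x * tgt x := by
              rw [← Finset.sum_add_distrib]
              congr 1
              exact Finset.sum_congr rfl fun x _ => by ring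
    _ = ∑ h : X → ZMod 2,
          (if (fun x => h x + h (e x)) = 0 then (2:ℂ)^(Fintype.card X) else 0) *
            ((-1:ℂ))^((∑ x, h x * tgt x).val) := by
        refine Finset.sum_congr rfl fun h _ => ?_
        rw [← Finset.sum_mul, char_sum (fun x => h x + h (e x))]
    _ = (2:ℂ)^(Fintype.card X) * ∑ h ∈ Finset.univ.filter
          (fun h : X → ZMod 2 => ∀ x, h (e x) = h x), ((-1:ℂ))^((∑ x, tgt x * h x).val) := by
        rw [Finset.mul_sum, Finset.sum_filter]
        refine Finset.sum_congr rfl fun h _ => ?_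
        have hiff : ((fun x => h x + h (e x)) = 0) ↔ (∀ x, h (e x) = h x) := by
          constructor
          · intro hc x
            exact (char2_iff2 _ _).1 (congrFun hc x)
          · intro hc
            funext x
            exact (char2_iff2 _ _).2 (hc x)
        have hsum : (∑ x, h x * tgt x) = ∑ x, tgt x * h x :=
          Finset.sum_congr rfl fun x _ => mul_comm _ _
        rw [hsum]
        split_ifs with h1 h2 h2
        · ring
        · exact absurd (hiff.1 h1) h2
        · exact absurd (hiff.2 h2) h1
        · ring

lemma inv_fun_to_finset (e : X ≃ X) (tgt : X → ZMod 2) :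
    (∑ h ∈ Finset.univ.filter (fun h : X → ZMod 2 => ∀ x, h (e x) = h x),
      ((-1:ℂ))^((∑ x, tgt x * h x).val)) =
    ∑ J ∈ Finset.univ.filter (fun J : Finset X => J.image e = J),
      ((-1:ℂ))^((∑ x ∈ J, tgt x).val) := by
  have memim : ∀ (J : Finset X) (y : X), y ∈ J.image e ↔ e.symm y ∈ J := by
    intro J y
    simp only [Finset.mem_image]
    constructor
    · rintro ⟨x, hx, rfl⟩; simpa using hx
    · intro hy; exact ⟨e.symm y, hy, by simp⟩
  refine Finset.sum_nbij' (fun h => Finset.univ.filter (fun x => h x = 1))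
    (fun J => fun x => if x ∈ J then 1 else 0) ?_ ?_ ?_ ?_ ?_
  · intro h hh
    simp only [Finset.mem_filter, Finset.mem_univ, true_and] at hh ⊢
    ext y
    rw [memim]
    simp only [Finset.mem_filter, Finset.mem_univ, true_and]
    rw [show h (e.symm y) = h y from by rw [← hh (e.symm y), Equiv.apply_symm_apply]]
  · intro J hJ
    simp only [Finset.mem_filter, Finset.mem_univ, true_and] at hJ ⊢
    intro x
    have : e x ∈ J ↔ x ∈ J := by
      conv_lhs => rw [← hJ]
      rw [memim, Equiv.symm_apply_apply]
    by_cases hx : x ∈ J <;> simp [hx, this.2, fun h => (this.1 h)] <;> tauto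
  · intro h hh
    funext x
    simp only [Finset.mem_filter, Finset.mem_univ, true_and]
    rcases zmod2_cases (h x) with h0 | h1
    · rw [h0]; simp [h0]
    · rw [h1]; simp [h1]
  · intro J hJ
    ext x
    simp only [Finset.mem_filter, Finset.mem_univ, true_and]
    by_cases hx : x ∈ J <;> simp [hx]
  · intro h hh
    congr 1
    rw [← Finset.sum_filter_add_sum_filter_not Finset.univ (fun x => h x = 1)
      (fun x => tgt x * h x)]
    have e1 : (∑ x ∈ Finset.univ.filter (fun x => h x = 1), tgt x * h x) =
        ∑ x ∈ Finset.univ.filter (fun x => h x = 1), tgt x := by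
      refine Finset.sum_congr rfl fun x hx => ?_
      simp only [Finset.mem_filter] at hx
      rw [hx.2, mul_one]
    have e2 : (∑ x ∈ Finset.univ.filter (fun x => ¬ h x = 1), tgt x * h x) = 0 := by
      refine Finset.sum_eq_zero fun x hx => ?_
      simp only [Finset.mem_filter] at hx
      rcases zmod2_cases (h x) with h0 | h1
      · rw [h0, mul_zero]
      · exact absurd h1 hx.2
    rw [e1, e2, add_zero]

lemma AB_identity (e : X ≃ X) (r : X → ZMod 2) :
    ((∑ f : X → ZMod 2, if (∀ x, f x = r x + f (e.symm x)) then (1:ℂ) else 0) -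
     (∑ f : X → ZMod 2, if (∀ x, f x = (r x + 1) + f (e.symm x)) then (1:ℂ) else 0)) =
    2 * ∑ J ∈ Finset.univ.filter (fun J : Finset X => J.image e = J ∧ Odd J.card),
      ((-1:ℂ))^((∑ x ∈ J, r x).val) := by
  rw [count_eq e r, count_eq e (fun x => r x + 1), inv_fun_to_finset, inv_fun_to_finset,
    ← Finset.sum_sub_distrib]
  have step : ∀ J : Finset X,
      ((-1:ℂ))^((∑ x ∈ J, r x).val) - ((-1:ℂ))^((∑ x ∈ J, (r x + 1)).val) =
      if Odd J.card then 2 * ((-1:ℂ))^((∑ x ∈ J, r x).val) else 0 := by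
    intro J
    have hsum : (∑ x ∈ J, (r x + 1)) = (∑ x ∈ J, r x) + (J.card : ZMod 2) := by
      rw [Finset.sum_add_distrib, Finset.sum_const, nsmul_eq_mul, mul_one]
    rw [hsum, sgn_add, sgn_natCast]
    rcases Nat.even_or_odd J.card with he | ho
    · rw [if_neg (by simpa using he), he.neg_one_pow]; ring
    · rw [if_pos ho, ho.neg_one_pow]; ring
  calc (∑ J ∈ Finset.univ.filter (fun J : Finset X => J.image e = J),
        (((-1:ℂ))^((∑ x ∈ J, r x).val) - ((-1:ℂ))^((∑ x ∈ J, (r x + 1)).val)))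
      = ∑ J ∈ Finset.univ.filter (fun J : Finset X => J.image e = J),
        (if Odd J.card then 2 * ((-1:ℂ))^((∑ x ∈ J, r x).val) else 0) :=
        Finset.sum_congr rfl fun J _ => step J
    _ = ∑ J ∈ (Finset.univ.filter (fun J : Finset X => J.image e = J)).filter
          (fun J => Odd J.card), 2 * ((-1:ℂ))^((∑ x ∈ J, r x).val) :=
        (Finset.sum_filter _ _).symm
    _ = 2 * ∑ J ∈ Finset.univ.filter (fun J : Finset X => J.image e = J ∧ Odd J.card),
        ((-1:ℂ))^((∑ x ∈ J, r x).val) := by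
        rw [Finset.filter_filter, ← Finset.mul_sum]


end AuxPure



section Lemmas

variable {H H₀ : Subgroup G} {hle : H ≤ H₀} {ι : G}

lemma iota_inv (hι2 : ι * ι = 1) : ι⁻¹ = ι := by
  rw [← mul_eq_one_iff_inv_eq]; exact hι2

-- ι • φ ≠ φ on G ⧸ H
lemma iota_smul_ne (hι2 : ι * ι = 1) (hcent : ∀ g : G, g * ι = ι * g) (hιH : ι ∉ H)
    (φ : G ⧸ H) : ι • φ ≠ φ := by
  induction φ using QuotientGroup.induction_on with
  | H a =>
    intro hc
    have : ι • (a : G ⧸ H) = ((ι * a : G) : G ⧸ H) := rfl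
    rw [this, QuotientGroup.eq] at hc
    have h1 : (ι * a)⁻¹ * a = ι := by
      rw [mul_inv_rev, iota_inv hι2, mul_assoc, ← hcent a, ← mul_assoc, inv_mul_cancel,
        one_mul]
    rw [h1] at hc
    exact hιH hc

lemma iota_smul_smul (hι2 : ι * ι = 1) (φ : G ⧸ H) : ι • ι • φ = φ := by
  rw [smul_smul, hι2, one_smul]

lemma smul_comm_iota (hcent : ∀ g : G, g * ι = ι * g) (g : G) (φ : G ⧸ H) :
    g • ι • φ = ι • g • φ := by
  rw [smul_smul, smul_smul, hcent]

-- ι acts trivially on G ⧸ H₀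
lemma iota_smul_base (hι2 : ι * ι = 1) (hcent : ∀ g : G, g * ι = ι * g) (hιH₀ : ι ∈ H₀)
    (y : G ⧸ H₀) : ι • y = y := by
  induction y using QuotientGroup.induction_on with
  | H a =>
    show ((ι * a : G) : G ⧸ H₀) = a
    rw [QuotientGroup.eq]
    have h1 : (ι * a)⁻¹ * a = ι := by
      rw [mul_inv_rev, iota_inv hι2, mul_assoc, ← hcent a, ← mul_assoc, inv_mul_cancel,
        one_mul]
    rw [h1]
    exact hιH₀

lemma proj_mk (a : G) : proj H H₀ hle ((a : G) : G ⧸ H) = ((a : G) : G ⧸ H₀) := rfl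

lemma proj_smul (g : G) (φ : G ⧸ H) :
    proj H H₀ hle (g • φ) = g • proj H H₀ hle φ := by
  induction φ using QuotientGroup.induction_on with
  | H a => rfl

lemma proj_eq_iff (hι2 : ι * ι = 1) (hcent : ∀ g : G, g * ι = ι * g)
    (hcosets : ∀ g : G, g ∈ H₀ ↔ g ∈ H ∨ ι * g ∈ H) (φ ψ : G ⧸ H) :
    proj H H₀ hle φ = proj H H₀ hle ψ ↔ φ = ψ ∨ φ = ι • ψ := by
  induction φ using QuotientGroup.induction_on with
  | H a =>
  induction ψ using QuotientGroup.induction_on with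
  | H b =>
    rw [proj_mk, proj_mk, QuotientGroup.eq, hcosets, QuotientGroup.eq]
    have : ι • ((b : G) : G ⧸ H) = ((ι * b : G) : G ⧸ H) := rfl
    rw [this, QuotientGroup.eq]
    have : ι * (a⁻¹ * b) = a⁻¹ * (ι * b) := by
      rw [← mul_assoc, ← hcent a⁻¹, mul_assoc]
    rw [this]

end Lemmas

section Lemmas2
variable {H H₀ : Subgroup G} {hle : H ≤ H₀} {ι : G}

lemma SPhi_smul (g : G) (Φ : Set (G ⧸ H)) : SPhi H (g • Φ) = g • SPhi H Φ := by
  ext x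
  rw [Set.mem_smul_set_iff_inv_smul_mem]
  show ((x : G) : G ⧸ H) ∈ g • Φ ↔ ((g⁻¹ * x : G) : G ⧸ H) ∈ Φ
  rw [Set.mem_smul_set_iff_inv_smul_mem]
  rfl

lemma SPhi_inj {Φ Ψ : Set (G ⧸ H)} (h : SPhi H Φ = SPhi H Ψ) : Φ = Ψ := by
  ext φ
  induction φ using QuotientGroup.induction_on with
  | H a => exact Set.ext_iff.1 h a

lemma mem_Htilde {Φ : Set (G ⧸ H)} {σ : G} : σ ∈ Htilde H Φ ↔ σ • Φ = Φ := by
  show σ • SPhi H Φ = SPhi H Φ ↔ _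
  rw [← SPhi_smul]
  constructor
  · exact SPhi_inj
  · intro h; rw [h]

lemma cm_smul {Φ : Set (G ⧸ H)} (hcent : ∀ g : G, g * ι = ι * g)
    (hΦ : IsCMType H ι Φ) (g : G) : IsCMType H ι (g • Φ) := by
  constructor
  · intro φ hφ hiφ
    rw [Set.mem_smul_set_iff_inv_smul_mem] at hφ hiφ
    rw [smul_comm_iota hcent] at hiφ
    exact hΦ.1 _ hφ hiφ
  · intro φ
    rcases hΦ.2 (g⁻¹ • φ) with h | h
    · left; rwa [Set.mem_smul_set_iff_inv_smul_mem]
    · right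
      rw [Set.mem_smul_set_iff_inv_smul_mem, smul_comm_iota hcent]
      exact h

lemma cm_ne_iota {Φ : Set (G ⧸ H)} (hι2 : ι * ι = 1) (hcent : ∀ g : G, g * ι = ι * g)
    (hΦ : IsCMType H ι Φ) : ι • Φ ≠ Φ := by
  intro hc
  rcases hΦ.2 ((1 : G) : G ⧸ H) with h | h
  · have : ι • ((1:G) : G ⧸ H) ∈ ι • Φ := Set.smul_mem_smul_set h
    rw [hc] at this
    exact hΦ.1 _ h this
  · have : ι • (ι • ((1:G) : G ⧸ H)) ∈ ι • Φ := Set.smul_mem_smul_set h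
    rw [hc, iota_smul_smul hι2] at this
    exact hΦ.1 _ this h

lemma mem_Ht0 {Φ : Set (G ⧸ H)} (hι2 : ι * ι = 1)
    (Ht₀ : Set (G ⧸ H) → Subgroup G)
    (hHt₀ : ∀ (Φ : Set (G ⧸ H)) (σ : G),
      σ ∈ Ht₀ Φ ↔ σ ∈ Htilde H Φ ∨ ∃ h ∈ Htilde H Φ, σ = ι * h) (σ : G) :
    σ ∈ Ht₀ Φ ↔ σ • Φ = Φ ∨ σ • Φ = ι • Φ := by
  rw [hHt₀, mem_Htilde]
  constructor
  · rintro (h | ⟨h, hh, rfl⟩)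
    · exact Or.inl h
    · right
      rw [mem_Htilde] at hh
      rw [mul_smul, hh]
  · rintro (h | h)
    · exact Or.inl h
    · right
      refine ⟨ι * σ, ?_, by rw [← mul_assoc, hι2, one_mul]⟩
      rw [mem_Htilde, mul_smul, h, smul_smul, hι2, one_smul]

end Lemmas2

lemma zmod2_cases' : ∀ a : ZMod 2, a = 0 ∨ a = 1 := by decide

section Sec
variable {H H₀ : Subgroup G} {hle : H ≤ H₀} {ι : G} {Φ₀ : Set (G ⧸ H)}
  (hι2 : ι * ι = 1) (hcent : ∀ g : G, g * ι = ι * g) (hιH : ι ∉ H)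
  (hcosets : ∀ g : G, g ∈ H₀ ↔ g ∈ H ∨ ι * g ∈ H)
  (hΦ₀ : IsCMType H ι Φ₀)
  {sec : (G ⧸ H₀) → (G ⧸ H)} (hsecm : ∀ y, sec y ∈ Φ₀)
  (hsecp : ∀ y, proj H H₀ hle (sec y) = y)

include hι2 hcent hcosets hΦ₀ hsecm hsecp

lemma sec_uniq : ∀ φ ∈ Φ₀, φ = sec (proj H H₀ hle φ) := by
  intro φ hφ
  have h := hsecp (proj H H₀ hle φ)
  rcases (proj_eq_iff (hle := hle) hι2 hcent hcosets φ (sec (proj H H₀ hle φ))).1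
      h.symm with h1 | h1
  · exact h1
  · exfalso
    have := hΦ₀.1 _ (hsecm (proj H H₀ hle φ))
    rw [← h1] at this
    exact this hφ

lemma rPhi_eq (τ : G) (y : G ⧸ H₀) :
    rPhi H H₀ hle Φ₀ τ y = if τ⁻¹ • sec y ∈ Φ₀ then 0 else 1 := by
  unfold rPhi
  congr 1
  rw [eq_iff_iff]
  constructor
  · rintro ⟨φ, hφ, hpr, hτ⟩
    have : φ = sec y := by
      have := sec_uniq hι2 hcent hcosets hΦ₀ hsecm hsecp φ hφ
      rwa [hpr] at this
    rwa [this] at hτ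
  · intro h
    exact ⟨sec y, hsecm y, hsecp y, h⟩

omit hιH in
lemma sec_step (τ : G) (y : G ⧸ H₀) :
    τ⁻¹ • sec y = ι ^ (rPhi H H₀ hle Φ₀ τ y).val • sec (τ⁻¹ • y) := by
  rw [rPhi_eq hι2 hcent hcosets hΦ₀ hsecm hsecp]
  by_cases h : τ⁻¹ • sec y ∈ Φ₀
  · rw [if_pos h]
    show τ⁻¹ • sec y = ι ^ (0 : ZMod 2).val • sec (τ⁻¹ • y)
    rw [show ((0:ZMod 2)).val = 0 from rfl, pow_zero, one_smul]
    have hpr : proj H H₀ hle (τ⁻¹ • sec y) = τ⁻¹ • y := by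
      rw [proj_smul, hsecp]
    have := sec_uniq hι2 hcent hcosets hΦ₀ hsecm hsecp _ h
    rwa [hpr] at this
  · rw [if_neg h]
    rw [show ((1:ZMod 2)).val = 1 from rfl, pow_one]
    have hpr : proj H H₀ hle (τ⁻¹ • sec y) = proj H H₀ hle (sec (τ⁻¹ • y)) := by
      rw [proj_smul, hsecp, hsecp]
    rcases (proj_eq_iff (hle := hle) hι2 hcent hcosets _ _).1 hpr with h1 | h1
    · exfalso; rw [h1] at h; exact h (hsecm _)
    · exact h1

omit hcosets hΦ₀ hsecm hsecp hcent in
lemma iota_pow_smul_add (hcent : ∀ g : G, g * ι = ι * g) (hιH' : ι ∉ H)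
    (a b : ZMod 2) (φ : G ⧸ H) :
    ι ^ ((a+b).val) • φ = ι ^ a.val • ι ^ b.val • φ := by
  rcases zmod2_cases' a with rfl | rfl <;> rcases zmod2_cases' b with rfl | rfl <;>
    simp only [show ((0+0:ZMod 2)).val = 0 from rfl, show ((0+1:ZMod 2)).val = 1 from rfl,
      show ((1+0:ZMod 2)).val = 1 from rfl, show ((1+1:ZMod 2)).val = 0 from rfl,
      show ((0:ZMod 2)).val = 0 from rfl, show ((1:ZMod 2)).val = 1 from rfl,
      pow_zero, pow_one, one_smul]
  exact (iota_smul_smul hι2 φ).symm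

omit hcent hcosets hΦ₀ hsecm hsecp in
lemma iota_pow_inj (hcent : ∀ g : G, g * ι = ι * g) (hιH' : ι ∉ H)
    (a b : ZMod 2) (φ : G ⧸ H) (h : ι ^ a.val • φ = ι ^ b.val • φ) : a = b := by
  rcases zmod2_cases' a with rfl | rfl <;> rcases zmod2_cases' b with rfl | rfl <;>
    simp only [show ((0:ZMod 2)).val = 0 from rfl, show ((1:ZMod 2)).val = 1 from rfl,
      pow_zero, pow_one, one_smul] at h
  · rfl
  · exact absurd h.symm (iota_smul_ne hι2 hcent hιH' φ)
  · exact absurd h (iota_smul_ne hι2 hcent hιH' φ)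
  · rfl

lemma rPhi_det (hιH' : ι ∉ H) (τ : G) (y : G ⧸ H₀) (a : ZMod 2)
    (h : τ⁻¹ • sec y = ι ^ a.val • sec (τ⁻¹ • y)) : rPhi H H₀ hle Φ₀ τ y = a := by
  refine iota_pow_inj hι2 hcent hιH' _ _ (sec (τ⁻¹ • y)) ?_
  rw [← sec_step hι2 hcent hcosets hΦ₀ hsecm hsecp, h]

lemma rPhi_one' (y : G ⧸ H₀) : rPhi H H₀ hle Φ₀ 1 y = 0 := by
  rw [rPhi_eq hι2 hcent hcosets hΦ₀ hsecm hsecp, if_pos]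
  rw [inv_one, one_smul]
  exact hsecm y

lemma rPhi_cocycle (hιH' : ι ∉ H) (σ τ : G) (y : G ⧸ H₀) :
    rPhi H H₀ hle Φ₀ (σ * τ) y = rPhi H H₀ hle Φ₀ σ y + rPhi H H₀ hle Φ₀ τ (σ⁻¹ • y) := by
  refine rPhi_det hι2 hcent hcosets hΦ₀ hsecm hsecp hιH' _ _ _ ?_
  have hcomm : ∀ (n : ℕ) (g : G) (φ : G ⧸ H), g • ι ^ n • φ = ι ^ n • g • φ := by
    intro n g φ
    rw [smul_smul, smul_smul, (Commute.pow_right (hcent g) n).eq]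
  calc (σ * τ)⁻¹ • sec y = τ⁻¹ • σ⁻¹ • sec y := by rw [mul_inv_rev, mul_smul]
    _ = τ⁻¹ • (ι ^ (rPhi H H₀ hle Φ₀ σ y).val • sec (σ⁻¹ • y)) := by
        rw [← sec_step hι2 hcent hcosets hΦ₀ hsecm hsecp]
    _ = ι ^ (rPhi H H₀ hle Φ₀ σ y).val • τ⁻¹ • sec (σ⁻¹ • y) := hcomm _ _ _
    _ = ι ^ (rPhi H H₀ hle Φ₀ σ y).val • ι ^ (rPhi H H₀ hle Φ₀ τ (σ⁻¹ • y)).val •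
          sec (τ⁻¹ • σ⁻¹ • y) := by
        rw [← sec_step hι2 hcent hcosets hΦ₀ hsecm hsecp]
    _ = ι ^ ((rPhi H H₀ hle Φ₀ σ y + rPhi H H₀ hle Φ₀ τ (σ⁻¹ • y)).val) •
          sec ((σ * τ)⁻¹ • y) := by
        rw [iota_pow_smul_add hι2 hcent hιH', mul_inv_rev, mul_smul]

lemma rPhi_inv_apply (hιH' : ι ∉ H) (x : G) (w : G ⧸ H₀) :
    rPhi H H₀ hle Φ₀ x⁻¹ w = rPhi H H₀ hle Φ₀ x (x • w) := by
  have h := rPhi_cocycle hι2 hcent hcosets hΦ₀ hsecm hsecp hιH' x x⁻¹ (x • w)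
  rw [mul_inv_cancel, rPhi_one' hι2 hcent hcosets hΦ₀ hsecm hsecp, inv_smul_smul] at h
  have : ∀ a b : ZMod 2, 0 = a + b → b = a := by decide
  exact this _ _ h

lemma rPhi_conj_sum (hιH' : ι ∉ H) (x g : G) (I : Finset (G ⧸ H₀))
    (hinv : I.image (fun y => (x⁻¹ * g * x) • y) = I) :
    (∑ y ∈ I, rPhi H H₀ hle Φ₀ (x⁻¹ * g * x) y) =
      ∑ z ∈ I.image (fun y => x • y), rPhi H H₀ hle Φ₀ g z := by
  have expand : ∀ y : G ⧸ H₀, rPhi H H₀ hle Φ₀ (x⁻¹ * g * x) y =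
      rPhi H H₀ hle Φ₀ x⁻¹ y + (rPhi H H₀ hle Φ₀ g (x • y) +
        rPhi H H₀ hle Φ₀ x (g⁻¹ • x • y)) := by
    intro y
    have h1 := rPhi_cocycle hι2 hcent hcosets hΦ₀ hsecm hsecp hιH' x⁻¹ (g * x) y
    have h2 := rPhi_cocycle hι2 hcent hcosets hΦ₀ hsecm hsecp hιH' g x (x • y)
    rw [show x⁻¹ * (g * x) = x⁻¹ * g * x by group, inv_inv] at h1
    rw [h1, h2]
  rw [Finset.sum_congr rfl fun y _ => expand y]
  rw [Finset.sum_add_distrib, Finset.sum_add_distrib]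
  have e1 : (∑ y ∈ I, rPhi H H₀ hle Φ₀ g (x • y)) =
      ∑ z ∈ I.image (fun y => x • y), rPhi H H₀ hle Φ₀ g z := by
    rw [Finset.sum_image]
    intro a _ b _ hab
    exact smul_left_cancel x hab
  have hinv' : I.image (fun y => (x⁻¹ * g⁻¹ * x) • y) = I := by
    have := congrArg (Finset.image (fun y => (x⁻¹ * g⁻¹ * x) • y)) hinv
    rw [Finset.image_image] at this
    have hid : ((fun y => (x⁻¹ * g⁻¹ * x) • y) ∘ (fun y : G ⧸ H₀ => (x⁻¹ * g * x) • y)) =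
        id := by
      funext y
      simp only [Function.comp_apply, id_eq, smul_smul]
      rw [show x⁻¹ * g⁻¹ * x * (x⁻¹ * g * x) = 1 by group, one_smul]
    rw [hid, Finset.image_id] at this
    exact this.symm
  have e2 : (∑ y ∈ I, rPhi H H₀ hle Φ₀ x (g⁻¹ • x • y)) =
      ∑ y ∈ I, rPhi H H₀ hle Φ₀ x (x • y) := by
    refine Finset.sum_nbij' (fun y => (x⁻¹ * g⁻¹ * x) • y) (fun y => (x⁻¹ * g * x) • y)
      ?_ ?_ ?_ ?_ ?_
    · intro y hy
      rw [← hinv']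
      exact Finset.mem_image_of_mem _ hy
    · intro y hy
      rw [← hinv]
      exact Finset.mem_image_of_mem _ hy
    · intro y _
      show (x⁻¹ * g * x) • (x⁻¹ * g⁻¹ * x) • y = y
      rw [smul_smul, show x⁻¹ * g * x * (x⁻¹ * g⁻¹ * x) = 1 by group, one_smul]
    · intro y _
      show (x⁻¹ * g⁻¹ * x) • (x⁻¹ * g * x) • y = y
      rw [smul_smul, show x⁻¹ * g⁻¹ * x * (x⁻¹ * g * x) = 1 by group, one_smul]
    · intro y _
      rw [smul_smul, smul_smul]
      congr 2
      group
  have e3 : (∑ y ∈ I, rPhi H H₀ hle Φ₀ x⁻¹ y) = ∑ y ∈ I, rPhi H H₀ hle Φ₀ x (x • y) := by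
    refine Finset.sum_congr rfl fun y _ => ?_
    exact rPhi_inv_apply hι2 hcent hcosets hΦ₀ hsecm hsecp hιH' x y
  rw [e1, e2, e3, ← add_assoc]
  have : ∀ a b : ZMod 2, a + b + a = b := by decide
  rw [show (∑ y ∈ I, rPhi H H₀ hle Φ₀ x (x • y)) +
      (∑ z ∈ I.image (fun y => x • y), rPhi H H₀ hle Φ₀ g z) +
      (∑ y ∈ I, rPhi H H₀ hle Φ₀ x (x • y)) =
      ∑ z ∈ I.image (fun y => x • y), rPhi H H₀ hle Φ₀ g z from this _ _]

end Sec

section PhiFL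
variable {H H₀ : Subgroup G} {hle : H ≤ H₀} {ι : G} {Φ₀ : Set (G ⧸ H)}
  (hι2 : ι * ι = 1) (hcent : ∀ g : G, g * ι = ι * g) (hιH : ι ∉ H) (hιH₀ : ι ∈ H₀)
  (hcosets : ∀ g : G, g ∈ H₀ ↔ g ∈ H ∨ ι * g ∈ H)
  (hΦ₀ : IsCMType H ι Φ₀)
  {sec : (G ⧸ H₀) → (G ⧸ H)} (hsecm : ∀ y, sec y ∈ Φ₀)
  (hsecp : ∀ y, proj H H₀ hle (sec y) = y)

include hι2 hcent hιH₀ in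
lemma proj_iota_pow (a : ZMod 2) (φ : G ⧸ H) :
    proj H H₀ hle (ι ^ a.val • φ) = proj H H₀ hle φ := by
  rcases zmod2_cases' a with rfl | rfl
  · rw [show ((0:ZMod 2)).val = 0 from rfl, pow_zero, one_smul]
  · rw [show ((1:ZMod 2)).val = 1 from rfl, pow_one, proj_smul,
      iota_smul_base hι2 hcent hιH₀]

include hι2 hcent hιH₀ hcosets hΦ₀ hsecm hsecp in
lemma mem_PhiF (f : (G ⧸ H₀) → ZMod 2) (ψ : G ⧸ H) :
    ψ ∈ PhiF H H₀ hle ι Φ₀ f ↔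
      ψ = ι ^ (f (proj H H₀ hle ψ)).val • sec (proj H H₀ hle ψ) := by
  constructor
  · rintro ⟨φ, hφ, rfl⟩
    simp only [proj_iota_pow hι2 hcent hιH₀]
    congr 1
    exact sec_uniq hι2 hcent hcosets hΦ₀ hsecm hsecp φ hφ
  · intro h
    refine ⟨sec (proj H H₀ hle ψ), hsecm _, ?_⟩
    simp only [hsecp]
    exact h.symm

include hι2 hcent hιH hιH₀ hcosets hΦ₀ hsecm hsecp in
lemma PhiF_isCM (f : (G ⧸ H₀) → ZMod 2) : IsCMType H ι (PhiF H H₀ hle ι Φ₀ f) := by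
  have memiff := mem_PhiF hι2 hcent hιH₀ hcosets hΦ₀ hsecm hsecp f
  constructor
  · intro ψ hψ hιψ
    rw [memiff] at hψ hιψ
    rw [proj_smul, iota_smul_base hι2 hcent hιH₀] at hιψ
    rw [← hψ] at hιψ
    exact iota_smul_ne hι2 hcent hιH ψ hιψ
  · intro ψ
    set y := proj H H₀ hle ψ with hy
    have hps : proj H H₀ hle (sec y) = proj H H₀ hle ψ := hsecp y
    rcases (proj_eq_iff (hle := hle) hι2 hcent hcosets ψ (sec y)).1 hps.symm with h1 | h1
    · rcases zmod2_cases' (f y) with h0 | h0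
      · left
        rw [memiff, ← hy, h0, show ((0:ZMod 2)).val = 0 from rfl, pow_zero, one_smul]
        exact h1
      · right
        rw [memiff, proj_smul, iota_smul_base hι2 hcent hιH₀, ← hy, h0,
          show ((1:ZMod 2)).val = 1 from rfl, pow_one, h1]
    · rcases zmod2_cases' (f y) with h0 | h0
      · right
        rw [memiff, proj_smul, iota_smul_base hι2 hcent hιH₀, ← hy, h0,
          show ((0:ZMod 2)).val = 0 from rfl, pow_zero, one_smul, h1,
          iota_smul_smul hι2]
      · left
        rw [memiff, ← hy, h0, show ((1:ZMod 2)).val = 1 from rfl, pow_one]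
        exact h1

include hι2 hcent hιH hιH₀ hcosets hΦ₀ hsecm hsecp in
lemma PhiF_inj {f f' : (G ⧸ H₀) → ZMod 2}
    (h : PhiF H H₀ hle ι Φ₀ f = PhiF H H₀ hle ι Φ₀ f') : f = f' := by
  funext y
  have hmem : (ι ^ (f y).val • sec y) ∈ PhiF H H₀ hle ι Φ₀ f := by
    rw [mem_PhiF hι2 hcent hιH₀ hcosets hΦ₀ hsecm hsecp,
      proj_iota_pow hι2 hcent hιH₀, hsecp]
  rw [h, mem_PhiF hι2 hcent hιH₀ hcosets hΦ₀ hsecm hsecp,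
    proj_iota_pow hι2 hcent hιH₀, hsecp] at hmem
  exact iota_pow_inj hι2 hcent hιH _ _ _ hmem

include hι2 hcent hιH hιH₀ hcosets hΦ₀ hsecm hsecp in
lemma PhiF_surj {Ψ : Set (G ⧸ H)} (hΨ : IsCMType H ι Ψ) :
    Ψ = PhiF H H₀ hle ι Φ₀ (fun y => if sec y ∈ Ψ then 0 else 1) := by
  set f : (G ⧸ H₀) → ZMod 2 := fun y => if sec y ∈ Ψ then 0 else 1 with hf
  ext ψ
  rw [mem_PhiF hι2 hcent hιH₀ hcosets hΦ₀ hsecm hsecp]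
  set y := proj H H₀ hle ψ with hy
  set s := sec y with hs
  have hps : proj H H₀ hle s = proj H H₀ hle ψ := hsecp y
  rcases (proj_eq_iff (hle := hle) hι2 hcent hcosets ψ s).1 hps.symm with h1 | h1
  · by_cases hsΨ : s ∈ Ψ
    · have : f y = 0 := by rw [hf]; simp [hs, hsΨ]; exact hsΨ
      rw [this, show ((0:ZMod 2)).val = 0 from rfl, pow_zero, one_smul]
      constructor
      · intro _; exact h1
      · intro _; rw [h1]; exact hsΨ
    · have : f y = 1 := by rw [hf]; simp [hs, hsΨ]; exact hsΨ
      rw [this, show ((1:ZMod 2)).val = 1 from rfl, pow_one]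
      constructor
      · intro hψΨ; exact absurd (h1 ▸ hψΨ) hsΨ
      · intro hψι
        exfalso
        rw [h1] at hψι
        exact iota_smul_ne hι2 hcent hιH s hψι.symm
  · by_cases hsΨ : s ∈ Ψ
    · have : f y = 0 := by rw [hf]; simp [hs, hsΨ]; exact hsΨ
      rw [this, show ((0:ZMod 2)).val = 0 from rfl, pow_zero, one_smul]
      constructor
      · intro hψΨ
        exfalso
        rw [h1] at hψΨ
        exact hΨ.1 s hsΨ hψΨ
      · intro hψs
        exfalso
        rw [hψs] at h1
        exact iota_smul_ne hι2 hcent hιH s h1.symm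
    · have : f y = 1 := by rw [hf]; simp [hs, hsΨ]; exact hsΨ
      rw [this, show ((1:ZMod 2)).val = 1 from rfl, pow_one]
      constructor
      · intro _; exact h1
      · intro _
        rw [h1]
        rcases hΨ.2 s with h | h
        · exact absurd h hsΨ
        · exact h

include hι2 hcent hιH hιH₀ hcosets hΦ₀ hsecm hsecp in
lemma PhiF_iota (f : (G ⧸ H₀) → ZMod 2) :
    ι • PhiF H H₀ hle ι Φ₀ f = PhiF H H₀ hle ι Φ₀ (f + 1) := by
  have hsucc : ∀ (a : ZMod 2) (φ : G ⧸ H), ι • ι ^ a.val • φ = ι ^ ((a+1).val) • φ := by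
    intro a φ
    rcases zmod2_cases' a with rfl | rfl
    · rw [show ((0:ZMod 2)).val = 0 from rfl, show ((0+1:ZMod 2)).val = 1 from rfl,
        pow_zero, pow_one, one_smul]
    · rw [show ((1:ZMod 2)).val = 1 from rfl, show ((1+1:ZMod 2)).val = 0 from rfl,
        pow_zero, pow_one, one_smul, iota_smul_smul hι2]
  have key : ∀ (ψ' A : G ⧸ H), ι • ψ' = A ↔ ψ' = ι • A := by
    intro ψ' A
    constructor
    · intro h; rw [← h, iota_smul_smul hι2]
    · intro h; rw [h, iota_smul_smul hι2]
  ext ψ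
  rw [Set.mem_smul_set_iff_inv_smul_mem, iota_inv hι2,
    mem_PhiF hι2 hcent hιH₀ hcosets hΦ₀ hsecm hsecp,
    mem_PhiF hι2 hcent hιH₀ hcosets hΦ₀ hsecm hsecp,
    proj_smul, iota_smul_base hι2 hcent hιH₀]
  rw [key, hsucc]
  simp only [Pi.add_apply, Pi.one_apply]

include hι2 hcent hιH hιH₀ hcosets hΦ₀ hsecm hsecp in
lemma PhiF_smul (τ : G) (f : (G ⧸ H₀) → ZMod 2) :
    τ • PhiF H H₀ hle ι Φ₀ f = PhiF H H₀ hle ι Φ₀ (starAct H H₀ hle Φ₀ τ f) := by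
  have hcomm : ∀ (n : ℕ) (g : G) (φ : G ⧸ H), g • ι ^ n • φ = ι ^ n • g • φ := by
    intro n g φ
    rw [smul_smul, smul_smul, (Commute.pow_right (hcent g) n).eq]
  ext ψ
  rw [Set.mem_smul_set_iff_inv_smul_mem,
    mem_PhiF hι2 hcent hιH₀ hcosets hΦ₀ hsecm hsecp,
    mem_PhiF hι2 hcent hιH₀ hcosets hΦ₀ hsecm hsecp,
    proj_smul]
  set y := proj H H₀ hle ψ
  have hss := sec_step hι2 hcent hcosets hΦ₀ hsecm hsecp τ y
  have hsec' : sec (τ⁻¹ • y) = ι ^ (rPhi H H₀ hle Φ₀ τ y).val • (τ⁻¹ • sec y) := by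
    have := congrArg (fun z => ι ^ (rPhi H H₀ hle Φ₀ τ y).val • z) hss
    rw [this, ← iota_pow_smul_add hι2 hcent hιH]
    have hz : ∀ a : ZMod 2, a + a = 0 := by decide
    rw [hz, show ((0:ZMod 2)).val = 0 from rfl, pow_zero, one_smul]
  constructor
  · intro h
    have : ψ = τ • (ι ^ (f (τ⁻¹ • y)).val • sec (τ⁻¹ • y)) := by
      rw [← h, smul_inv_smul]
    rw [this, hsec', hcomm, hcomm, smul_inv_smul, ← iota_pow_smul_add hι2 hcent hιH]
    show _ = ι ^ ((rPhi H H₀ hle Φ₀ τ + indAct H₀ τ f) y).val • sec y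
    rw [Pi.add_apply]
    show _ = ι ^ ((rPhi H H₀ hle Φ₀ τ y + f (τ⁻¹ • y)).val) • sec y
    rw [add_comm (f (τ⁻¹ • y))]
  · intro h
    rw [show (starAct H H₀ hle Φ₀ τ f) y = rPhi H H₀ hle Φ₀ τ y + f (τ⁻¹ • y) from rfl]
      at h
    rw [h, hsec']
    conv_lhs => rw [hcomm]
    conv_lhs => rw [iota_pow_smul_add hι2 hcent hιH]
    conv_rhs => rw [hcomm]

section Orbits
variable {G : Type} [Group G] [Fintype G] {β : Type} [DecidableEq β]

lemma indChar_orbit (a : G → β → β) (ha1 : ∀ b, a 1 b = b)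
    (hamul : ∀ x y b, a (x * y) b = a x (a y b))
    (b : β) (U : Subgroup G) (g : G) (χ : G → ℂ) (F : β → ℂ) (k : ℕ)
    (hk : k ≠ 0)
    (hcard : Nat.card U = k * (Finset.univ.filter (fun x : G => a x b = b)).card)
    (hstep : ∀ x : G, (if x⁻¹ * g * x ∈ U then χ (x⁻¹ * g * x) else 0) = F (a x b)) :
    indChar U χ g =
      (k : ℂ)⁻¹ * ∑ c ∈ Finset.univ.image (fun x : G => a x b), F c := by
  have hainv : ∀ (x : G) (c : β), a x⁻¹ (a x c) = c := by
    intro x c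
    rw [← hamul, inv_mul_cancel, ha1]
  unfold indChar
  rw [finsum_eq_sum_of_fintype]
  rw [Finset.sum_congr rfl fun x _ => hstep x,
    Finset.sum_comp F (fun x : G => a x b)]
  have fib : ∀ c ∈ Finset.univ.image (fun x : G => a x b),
      (Finset.univ.filter (fun x : G => a x b = c)).card =
        (Finset.univ.filter (fun x : G => a x b = b)).card := by
    intro c hc
    obtain ⟨x₀, _, hx₀⟩ := Finset.mem_image.1 hc
    refine Finset.card_bij' (fun x _ => x₀⁻¹ * x) (fun x _ => x₀ * x) ?_ ?_ ?_ ?_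
    · intro x hx
      simp only [Finset.mem_filter, Finset.mem_univ, true_and] at hx ⊢
      rw [hamul, hx, ← hx₀, hainv]
    · intro x hx
      simp only [Finset.mem_filter, Finset.mem_univ, true_and] at hx ⊢
      rw [hamul, hx, hx₀]
    · intro x _
      show x₀ * (x₀⁻¹ * x) = x
      rw [← mul_assoc, mul_inv_cancel, one_mul]
    · intro x _
      show x₀⁻¹ * (x₀ * x) = x
      rw [← mul_assoc, inv_mul_cancel, one_mul]
  rw [Finset.sum_congr rfl fun c hc => by rw [fib c hc]]
  have hpos : (((Finset.univ.filter (fun x : G => a x b = b)).card : ℕ) : ℂ) ≠ 0 := by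
    have h1 : (1 : G) ∈ Finset.univ.filter (fun x : G => a x b = b) := by simp [ha1]
    exact Nat.cast_ne_zero.2 (Finset.card_pos.2 ⟨1, h1⟩).ne'
  have hkC : ((k : ℕ) : ℂ) ≠ 0 := Nat.cast_ne_zero.2 hk
  have hsmul : (∑ c ∈ Finset.univ.image (fun x : G => a x b),
      (Finset.univ.filter (fun x : G => a x b = b)).card • F c) =
      ((Finset.univ.filter (fun x : G => a x b = b)).card : ℂ) *
        ∑ c ∈ Finset.univ.image (fun x : G => a x b), F c := by
    rw [Finset.mul_sum]
    exact Finset.sum_congr rfl fun c _ => by rw [nsmul_eq_mul]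
  rw [hsmul, hcard, Nat.cast_mul, mul_inv]
  set n := ((Finset.univ.filter (fun x : G => a x b = b)).card : ℂ)
  set S := ∑ c ∈ Finset.univ.image (fun x : G => a x b), F c
  field_simp

lemma sum_over_orbits [Fintype β] (a : G → β → β) (ha1 : ∀ b, a 1 b = b)
    (hamul : ∀ x y b, a (x * y) b = a x (a y b))
    (Λ : Finset β) (P : β → Prop) (F : β → ℂ)
    (hcl : ∀ (x : G) (b : β), P b → P (a x b))
    (hΛ : ∀ b ∈ Λ, P b)
    (hrep : ∀ c, P c → ∃ b ∈ Λ, ∃ x : G, c = a x b)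
    (huniq : ∀ b ∈ Λ, ∀ b' ∈ Λ, (∃ x : G, b' = a x b) → b = b') :
    (∑ b ∈ Λ, ∑ c ∈ Finset.univ.image (fun x : G => a x b), F c) =
      ∑ c ∈ Finset.univ.filter P, F c := by
  have hdisj : (↑Λ : Set β).PairwiseDisjoint
      (fun b => Finset.univ.image (fun x : G => a x b)) := by
    intro b hb b' hb' hne
    simp only [Function.onFun]
    rw [Finset.disjoint_left]
    intro c hc hc'
    obtain ⟨x, _, hx⟩ := Finset.mem_image.1 hc
    obtain ⟨x', _, hx'⟩ := Finset.mem_image.1 hc'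
    apply hne
    refine huniq b hb b' hb' ⟨x'⁻¹ * x, ?_⟩
    rw [hamul, hx, ← hx']
    rw [← hamul, inv_mul_cancel, ha1]
  rw [← Finset.sum_biUnion hdisj]
  congr 1
  ext c
  rw [Finset.mem_biUnion, Finset.mem_filter]
  constructor
  · rintro ⟨b, hb, hc⟩
    obtain ⟨x, _, hx⟩ := Finset.mem_image.1 hc
    exact ⟨Finset.mem_univ _, hx ▸ hcl x b (hΛ b hb)⟩
  · rintro ⟨_, hP⟩
    obtain ⟨b, hb, x, hx⟩ := hrep c hP
    exact ⟨b, hb, Finset.mem_image.2 ⟨x, Finset.mem_univ _, hx.symm⟩⟩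

end Orbits

/-- **Theorem: character identity.**
`∑_{Φ∈Λ} Ind_{H̃₀(Φ)}^G(χ_{H̃₀(Φ)/H̃(Φ)}) = ∑_{I∈J_odd} Ind_{H₀^G(I)}^G(χ̃_I)` as characters
of `G`, where for `I ⊆ G/H₀` of odd cardinality, `H₀^G(I) = {σ ∈ G : ρ(σ)I = I}` and
`χ̃_I(σ) = (−1)^{∑_{φH₀∈I} r_{Φ₀}(σ)(φH₀)}` (whose kernel is `H(I)`). -/
theorem character_identity
    {G : Type} [Group G] [Finite G] (H H₀ : Subgroup G) (hle : H ≤ H₀) (ι : G)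
    (hι2 : ι * ι = 1) (hι1 : ι ≠ 1) (hcent : ∀ g : G, g * ι = ι * g)
    (hιH : ι ∉ H) (hιH₀ : ι ∈ H₀)
    (hcosets : ∀ g : G, g ∈ H₀ ↔ g ∈ H ∨ ι * g ∈ H)
    (hfaithful : H.normalCore = ⊥)
    (Φ₀ : Set (G ⧸ H)) (hΦ₀ : IsCMType H ι Φ₀)
    -- `Λ`: a system of representatives for the conjugacy classes of the CM-types of `K`
    (Λ : Finset (Set (G ⧸ H)))
    (hΛCM : ∀ Φ ∈ Λ, IsCMType H ι Φ)
    (hΛrep : ∀ Φ : Set (G ⧸ H), IsCMType H ι Φ → ∃ Φ' ∈ Λ, ∃ τ : G, Φ = τ • Φ')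
    (hΛuniq : ∀ Φ ∈ Λ, ∀ Φ' ∈ Λ, (∃ τ : G, Φ' = τ • Φ) → Φ = Φ')
    -- `H̃₀(Φ) = H̃(Φ) ∪ ιH̃(Φ)`
    (Ht₀ : Set (G ⧸ H) → Subgroup G)
    (hHt₀ : ∀ (Φ : Set (G ⧸ H)) (σ : G),
      σ ∈ Ht₀ Φ ↔ σ ∈ Htilde H Φ ∨ ∃ h ∈ Htilde H Φ, σ = ι * h)
    -- `J_odd`: a system of representatives for the orbits of odd-cardinality subsets of `G/H₀`
    (Jodd : Finset (Finset (G ⧸ H₀)))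
    (hJodd : ∀ I ∈ Jodd, Odd I.card)
    (hJrep : ∀ I : Finset (G ⧸ H₀), Odd I.card →
      ∃ I' ∈ Jodd, ∃ τ : G, I = I'.image (fun x => τ • x))
    (hJuniq : ∀ I ∈ Jodd, ∀ I' ∈ Jodd,
      (∃ τ : G, I' = I.image (fun x => τ • x)) → I = I')
    -- `H₀^G(I) = {σ ∈ G : ρ(σ)I = I}`
    (H₀G : Finset (G ⧸ H₀) → Subgroup G)
    (hH₀G : ∀ (I : Finset (G ⧸ H₀)) (σ : G),
      σ ∈ H₀G I ↔ I.image (fun x => σ • x) = I) :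
    ∀ g : G,
      (∑ Φ ∈ Λ, indChar (Ht₀ Φ) (fun u => if u ∈ Htilde H Φ then 1 else -1) g) =
      ∑ I ∈ Jodd, indChar (H₀G I)
        (fun σ => (-1 : ℂ) ^ (∑ x ∈ I, rPhi H H₀ hle Φ₀ σ x).val) g := by
  intro g
  cases nonempty_fintype G
  letI : Fintype (G ⧸ H₀) := Fintype.ofFinite _
  letI : Fintype (G ⧸ H) := Fintype.ofFinite _
  letI : Fintype (Set (G ⧸ H)) := Fintype.ofFinite _
  -- a section of proj inside Φ₀
  have hex : ∀ y : G ⧸ H₀, ∃ φ : G ⧸ H, φ ∈ Φ₀ ∧ proj H H₀ hle φ = y := by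
    intro y
    induction y using QuotientGroup.induction_on with
    | H b =>
      rcases hΦ₀.2 ((b : G) : G ⧸ H) with h | h
      · exact ⟨_, h, rfl⟩
      · refine ⟨_, h, ?_⟩
        rw [proj_smul, proj_mk, iota_smul_base hι2 hcent hιH₀]
  choose sec hsec using hex
  have hsecm : ∀ y, sec y ∈ Φ₀ := fun y => (hsec y).1
  have hsecp : ∀ y, proj H H₀ hle (sec y) = y := fun y => (hsec y).2
  clear hsec
  -- the permutation induced by g on G ⧸ H₀
  let e : (G ⧸ H₀) ≃ (G ⧸ H₀) :=
    ⟨fun y => g • y, fun y => g⁻¹ • y, fun y => by simp, fun y => by simp⟩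
  -- conjugation juggling for sets
  have key : ∀ (x : G) (Φ : Set (G ⧸ H)), g • (x • Φ) = x • ((x⁻¹ * g * x) • Φ) := by
    intro x Φ
    rw [smul_smul, smul_smul, show x * (x⁻¹ * g * x) = g * x by group]
  have conj_smul_iff : ∀ (x : G) (Φ Ψ : Set (G ⧸ H)),
      ((x⁻¹ * g * x) • Φ = Ψ) ↔ (g • (x • Φ) = x • Ψ) := by
    intro x Φ Ψ
    constructor
    · intro h
      rw [key, h]
    · intro h
      rw [key] at h
      exact MulAction.injective x h
  ---------------------------------------------------------------------------
  -- LHS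
  ---------------------------------------------------------------------------
  have lhs_eq : ∀ Φ ∈ Λ,
      indChar (Ht₀ Φ) (fun u => if u ∈ Htilde H Φ then 1 else -1) g =
      (2 : ℂ)⁻¹ * ∑ c ∈ Finset.univ.image (fun x : G => x • Φ),
        (if (g • c = c ∨ g • c = ι • c) then (if g • c = c then (1:ℂ) else -1) else 0) := by
    intro Φ hΦm
    have hCM := hΛCM Φ hΦm
    refine indChar_orbit (fun x (Φ : Set (G ⧸ H)) => x • Φ) (fun Φ => one_smul G Φ)
      (fun x y Φ => mul_smul x y Φ) Φ (Ht₀ Φ) g _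
      (fun c => if (g • c = c ∨ g • c = ι • c) then (if g • c = c then (1:ℂ) else -1) else 0)
      2 two_ne_zero ?_ ?_
    · -- cardinality
      have h1 : Nat.card (Ht₀ Φ) = (Finset.univ.filter (fun x : G => x ∈ Ht₀ Φ)).card := by
        rw [Nat.card_eq_fintype_card]
        exact Fintype.card_subtype _
      have hdisj : Disjoint (Finset.univ.filter (fun x : G => x • Φ = Φ))
          (Finset.univ.filter (fun x : G => x • Φ = ι • Φ)) := by
        rw [Finset.disjoint_left]
        intro x hx hx'
        simp only [Finset.mem_filter, Finset.mem_univ, true_and] at hx hx'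
        exact cm_ne_iota hι2 hcent hCM (by rw [← hx', hx])
      have h2 : Finset.univ.filter (fun x : G => x ∈ Ht₀ Φ) =
          (Finset.univ.filter (fun x : G => x • Φ = Φ)) ∪
            (Finset.univ.filter (fun x : G => x • Φ = ι • Φ)) := by
        rw [← Finset.filter_or]
        exact Finset.filter_congr fun x _ => mem_Ht0 hι2 Ht₀ hHt₀ x
      rw [h1, h2, Finset.card_union_of_disjoint hdisj, two_mul]
      congr 1
      refine (Finset.card_bij' (fun x _ => ι * x) (fun x _ => ι * x) ?_ ?_ ?_ ?_).symm
      · intro x hx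
        simp only [Finset.mem_filter, Finset.mem_univ, true_and] at hx ⊢
        rw [mul_smul, hx]
      · intro x hx
        simp only [Finset.mem_filter, Finset.mem_univ, true_and] at hx ⊢
        rw [mul_smul, hx, smul_smul, hι2, one_smul]
      · intro x _
        show ι * (ι * x) = x
        rw [← mul_assoc, hι2, one_mul]
      · intro x _
        show ι * (ι * x) = x
        rw [← mul_assoc, hι2, one_mul]
    · -- step
      intro x
      have hmemiff : (x⁻¹ * g * x ∈ Ht₀ Φ) ↔
          (g • (x • Φ) = (x • Φ) ∨ g • (x • Φ) = ι • (x • Φ)) := by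
        rw [mem_Ht0 hι2 Ht₀ hHt₀, conj_smul_iff, conj_smul_iff,
          show x • ι • Φ = ι • x • Φ from by rw [smul_smul, smul_smul, hcent]]
      have hiff : (x⁻¹ * g * x ∈ Htilde H Φ) ↔ g • (x • Φ) = x • Φ := by
        rw [mem_Htilde, conj_smul_iff]
      show _ = if (g • (x • Φ) = (x • Φ) ∨ g • (x • Φ) = ι • (x • Φ))
        then (if g • (x • Φ) = (x • Φ) then (1:ℂ) else -1) else 0
      by_cases hx : x⁻¹ * g * x ∈ Ht₀ Φ
      · rw [if_pos hx, if_pos (hmemiff.1 hx)]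
        exact if_congr hiff rfl rfl
      · rw [if_neg hx, if_neg (fun hq => hx (hmemiff.2 hq))]
  have hL1 : (∑ Φ ∈ Λ, indChar (Ht₀ Φ) (fun u => if u ∈ Htilde H Φ then 1 else -1) g) =
      (2:ℂ)⁻¹ * ∑ Ψ ∈ Finset.univ.filter (IsCMType H ι),
        (if (g • Ψ = Ψ ∨ g • Ψ = ι • Ψ) then (if g • Ψ = Ψ then (1:ℂ) else -1) else 0) := by
    rw [Finset.sum_congr rfl lhs_eq, ← Finset.mul_sum]
    congr 1
    exact sum_over_orbits (fun (x : G) (Φ : Set (G ⧸ H)) => x • Φ) (fun Φ => one_smul G Φ)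
      (fun x y Φ => mul_smul x y Φ) Λ (IsCMType H ι) _
      (fun x b hb => cm_smul hcent hb x) hΛCM hΛrep hΛuniq
  -- turn the indicator into a difference
  have hdiff : ∀ Ψ ∈ Finset.univ.filter (IsCMType H ι),
      (if (g • Ψ = Ψ ∨ g • Ψ = ι • Ψ) then (if g • Ψ = Ψ then (1:ℂ) else -1) else 0) =
      (if g • Ψ = Ψ then (1:ℂ) else 0) - (if g • Ψ = ι • Ψ then (1:ℂ) else 0) := by
    intro Ψ hΨ
    rw [Finset.mem_filter] at hΨ
    by_cases h1 : g • Ψ = Ψ <;> by_cases h2 : g • Ψ = ι • Ψ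
    · exact absurd (by rw [← h2, h1] : ι • Ψ = Ψ) (cm_ne_iota hι2 hcent hΨ.2)
    · rw [if_pos (Or.inl h1), if_pos h1, if_pos h1, if_neg h2]
      norm_num
    · rw [if_pos (Or.inr h2), if_neg h1, if_neg h1, if_pos h2]
      norm_num
    · rw [if_neg (not_or.mpr ⟨h1, h2⟩), if_neg h1, if_neg h2]
      norm_num
  -- the two fixed-point conditions in terms of functions
  have condA : ∀ f : (G ⧸ H₀) → ZMod 2,
      (g • PhiF H H₀ hle ι Φ₀ f = PhiF H H₀ hle ι Φ₀ f) ↔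
        (∀ x, f x = rPhi H H₀ hle Φ₀ g x + f (e.symm x)) := by
    intro f
    rw [PhiF_smul hι2 hcent hιH hιH₀ hcosets hΦ₀ hsecm hsecp]
    constructor
    · intro h x
      have h2 := congrFun (PhiF_inj hι2 hcent hιH hιH₀ hcosets hΦ₀ hsecm hsecp h) x
      exact h2.symm
    · intro h
      exact congrArg _ (funext fun x => (h x).symm)
  have condB : ∀ f : (G ⧸ H₀) → ZMod 2,
      (g • PhiF H H₀ hle ι Φ₀ f = ι • PhiF H H₀ hle ι Φ₀ f) ↔
        (∀ x, f x = (rPhi H H₀ hle Φ₀ g x + 1) + f (e.symm x)) := by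
    intro f
    rw [PhiF_smul hι2 hcent hιH hιH₀ hcosets hΦ₀ hsecm hsecp,
      PhiF_iota hι2 hcent hιH hιH₀ hcosets hΦ₀ hsecm hsecp]
    have hz : ∀ a b c : ZMod 2, (c + b = a + 1) ↔ (a = (c + 1) + b) := by decide
    constructor
    · intro h x
      have h2 := congrFun (PhiF_inj hι2 hcent hιH hιH₀ hcosets hΦ₀ hsecm hsecp h) x
      exact (hz (f x) (f (e.symm x)) (rPhi H H₀ hle Φ₀ g x)).1 h2
    · intro h
      refine congrArg _ (funext fun x => ?_)
      exact (hz (f x) (f (e.symm x)) (rPhi H H₀ hle Φ₀ g x)).2 (h x)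
  have hbijA : (∑ f : (G ⧸ H₀) → ZMod 2,
        (if (∀ x, f x = rPhi H H₀ hle Φ₀ g x + f (e.symm x)) then (1:ℂ) else 0)) =
      ∑ Ψ ∈ Finset.univ.filter (IsCMType H ι), (if g • Ψ = Ψ then (1:ℂ) else 0) := by
    refine Finset.sum_nbij' (fun f => PhiF H H₀ hle ι Φ₀ f)
      (fun Ψ => fun y => if sec y ∈ Ψ then (0 : ZMod 2) else 1) ?_ ?_ ?_ ?_ ?_
    · intro f _
      exact Finset.mem_filter.2 ⟨Finset.mem_univ _,
        PhiF_isCM hι2 hcent hιH hιH₀ hcosets hΦ₀ hsecm hsecp f⟩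
    · intro Ψ _
      exact Finset.mem_univ _
    · intro f _
      exact (PhiF_inj hι2 hcent hιH hιH₀ hcosets hΦ₀ hsecm hsecp
        (PhiF_surj hι2 hcent hιH hιH₀ hcosets hΦ₀ hsecm hsecp
          (PhiF_isCM hι2 hcent hιH hιH₀ hcosets hΦ₀ hsecm hsecp f)).symm)
    · intro Ψ hΨ
      exact (PhiF_surj hι2 hcent hιH hιH₀ hcosets hΦ₀ hsecm hsecp
        (Finset.mem_filter.1 hΨ).2).symm
    · intro f _
      exact if_congr (condA f).symm rfl rfl
  have hbijB : (∑ f : (G ⧸ H₀) → ZMod 2,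
        (if (∀ x, f x = (rPhi H H₀ hle Φ₀ g x + 1) + f (e.symm x)) then (1:ℂ) else 0)) =
      ∑ Ψ ∈ Finset.univ.filter (IsCMType H ι), (if g • Ψ = ι • Ψ then (1:ℂ) else 0) := by
    refine Finset.sum_nbij' (fun f => PhiF H H₀ hle ι Φ₀ f)
      (fun Ψ => fun y => if sec y ∈ Ψ then (0 : ZMod 2) else 1) ?_ ?_ ?_ ?_ ?_
    · intro f _
      exact Finset.mem_filter.2 ⟨Finset.mem_univ _,
        PhiF_isCM hι2 hcent hιH hιH₀ hcosets hΦ₀ hsecm hsecp f⟩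
    · intro Ψ _
      exact Finset.mem_univ _
    · intro f _
      exact (PhiF_inj hι2 hcent hιH hιH₀ hcosets hΦ₀ hsecm hsecp
        (PhiF_surj hι2 hcent hιH hιH₀ hcosets hΦ₀ hsecm hsecp
          (PhiF_isCM hι2 hcent hιH hιH₀ hcosets hΦ₀ hsecm hsecp f)).symm)
    · intro Ψ hΨ
      exact (PhiF_surj hι2 hcent hιH hιH₀ hcosets hΦ₀ hsecm hsecp
        (Finset.mem_filter.1 hΨ).2).symm
    · intro f _
      exact if_congr (condB f).symm rfl rfl
  have hL : (∑ Φ ∈ Λ, indChar (Ht₀ Φ) (fun u => if u ∈ Htilde H Φ then 1 else -1) g) =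
      ∑ J ∈ Finset.univ.filter
          (fun J : Finset (G ⧸ H₀) => J.image ⇑e = J ∧ Odd J.card),
        ((-1:ℂ))^((∑ x ∈ J, rPhi H H₀ hle Φ₀ g x).val) := by
    rw [hL1, Finset.sum_congr rfl hdiff, Finset.sum_sub_distrib, ← hbijA, ← hbijB,
      AB_identity e (rPhi H H₀ hle Φ₀ g), inv_mul_cancel_left₀ two_ne_zero]
  ---------------------------------------------------------------------------
  -- RHS
  ---------------------------------------------------------------------------
  have him : ∀ (s t : G) (J : Finset (G ⧸ H₀)),
      (J.image (fun y => s • y)).image (fun y => t • y) = J.image (fun y => (t * s) • y) := by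
    intro s t J
    rw [Finset.image_image]
    congr 1
    funext z
    exact (mul_smul t s z).symm
  have himinj : ∀ (s : G) (J J' : Finset (G ⧸ H₀)),
      J.image (fun y => s • y) = J'.image (fun y => s • y) → J = J' := by
    intro s J J' h
    have := congrArg (Finset.image (fun y : G ⧸ H₀ => s⁻¹ • y)) h
    rw [him, him, inv_mul_cancel] at this
    simpa using this
  have rhs_eq : ∀ I ∈ Jodd,
      indChar (H₀G I) (fun σ => (-1:ℂ) ^ (∑ x ∈ I, rPhi H H₀ hle Φ₀ σ x).val) g =
      (((1:ℕ)) : ℂ)⁻¹ * ∑ c ∈ Finset.univ.image (fun x : G => I.image (fun y => x • y)),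
        (if c.image (fun y => g • y) = c
          then ((-1:ℂ) ^ (∑ x ∈ c, rPhi H H₀ hle Φ₀ g x).val) else 0) := by
    intro I hI
    refine indChar_orbit (fun x (J : Finset (G ⧸ H₀)) => J.image (fun y => x • y))
      ?_ ?_ I (H₀G I) g _
      (fun c => if c.image (fun y => g • y) = c
        then ((-1:ℂ) ^ (∑ x ∈ c, rPhi H H₀ hle Φ₀ g x).val) else 0)
      1 one_ne_zero ?_ ?_
    · intro J
      show Finset.image (fun y => (1:G) • y) J = J
      simp
    · intro x y J
      show Finset.image (fun z => (x * y) • z) J =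
        Finset.image (fun z => x • z) (Finset.image (fun z => y • z) J)
      rw [Finset.image_image]
      congr 1
      funext z
      exact mul_smul x y z
    · rw [one_mul, Nat.card_eq_fintype_card]
      rw [show (Fintype.card (H₀G I) : ℕ) = Fintype.card {x : G // x ∈ H₀G I} from rfl,
        Fintype.card_subtype]
      exact congrArg Finset.card (Finset.filter_congr fun x _ => hH₀G I x)
    · intro x
      have hmemiff : (x⁻¹ * g * x ∈ H₀G I) ↔
          (I.image (fun y => x • y)).image (fun y => g • y) = I.image (fun y => x • y) := by
        rw [hH₀G]
        constructor
        · intro h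
          rw [him, show g * x = x * (x⁻¹ * g * x) by group, ← him, h]
        · intro h
          rw [him, show g * x = x * (x⁻¹ * g * x) by group, ← him] at h
          exact himinj x _ _ h
      show _ = if (I.image (fun y => x • y)).image (fun y => g • y) = I.image (fun y => x • y)
        then ((-1:ℂ) ^ (∑ z ∈ I.image (fun y => x • y), rPhi H H₀ hle Φ₀ g z).val) else 0
      by_cases hx : x⁻¹ * g * x ∈ H₀G I
      · rw [if_pos hx, if_pos (hmemiff.1 hx),
          rPhi_conj_sum hι2 hcent hcosets hΦ₀ hsecm hsecp hιH x g I ((hH₀G I _).1 hx)]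
      · rw [if_neg hx, if_neg (fun hq => hx (hmemiff.2 hq))]
  have hR : (∑ I ∈ Jodd, indChar (H₀G I)
        (fun σ => (-1 : ℂ) ^ (∑ x ∈ I, rPhi H H₀ hle Φ₀ σ x).val) g) =
      ∑ J ∈ Finset.univ.filter
          (fun J : Finset (G ⧸ H₀) => J.image ⇑e = J ∧ Odd J.card),
        ((-1:ℂ))^((∑ x ∈ J, rPhi H H₀ hle Φ₀ g x).val) := by
    rw [Finset.sum_congr rfl rhs_eq, ← Finset.mul_sum,
      sum_over_orbits (fun (x : G) (J : Finset (G ⧸ H₀)) => J.image (fun y => x • y))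
        (fun J => by
          show Finset.image (fun y => (1:G) • y) J = J
          simp)
        (fun x y J => by
          show Finset.image (fun z => (x * y) • z) J =
            Finset.image (fun z => x • z) (Finset.image (fun z => y • z) J)
          rw [Finset.image_image]; congr 1; funext z; exact mul_smul x y z)
        Jodd (fun I => Odd I.card) _
        (fun x J hJ => by
          show Odd (Finset.image (fun y => x • y) J).card
          rwa [Finset.card_image_of_injective J (MulAction.injective x)])
        hJodd hJrep hJuniq]
    rw [Nat.cast_one, inv_one, one_mul, ← Finset.sum_filter, Finset.filter_filter]
    apply Finset.sum_congr _ (fun _ _ => rfl)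
    ext J
    simp only [Finset.mem_filter, Finset.mem_univ, true_and]
    tauto
  rw [hL, hR]
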